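/- Let K be a field of characteristic different from 2 and m ≥ 1 an integer. In the polynomial ring K[x,y]: (1) the ideal sum (y − x^m) + (y + x^m) equals the ideal (y, x^m); (2) the intersection of the ideals (y − x^m) + (x,y)^{m+1} and (y + x^m) + (x,y)^{m+1} equals the ideal (x^{m+1}, xy, y²). -/
import Mathlib


open MvPolynomial

noncomputable section

/-- The coefficient `a_i` of `s^(n-i) t^i` in a binary form `f` of degree `n`. -/
def bcoeff {K : Type*} [Field K] (n : ℕ) (f : MvPolynomial (Fin 2) K) (i : Fin (n + 1)) : K :=
  MvPolynomial.coeff (Finsupp.single 0 (n - (i : ℕ)) + Finsupp.single 1 (i : ℕ)) f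

/-- The binary form of degree `k` with coefficient vector `x`. -/
def formOf {K : Type*} [Field K] (k : ℕ) (x : Fin (k + 1) → K) : MvPolynomial (Fin 2) K :=
  ∑ i : Fin (k + 1),
    MvPolynomial.C (x i) * MvPolynomial.X 0 ^ (k - (i : ℕ)) * MvPolynomial.X 1 ^ (i : ℕ)

/-- The matrix `M_k` associated to the parameterization `f`: the first `n-k+1` rows contain
the variables `x_0, …, x_k` in staircase position, the last three rows are the coefficient
vectors of `f_0, f_1, f_2`. -/
def Mmat {K : Type*} [Field K] (n k : ℕ) (f : Fin 3 → MvPolynomial (Fin 2) K) :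
    Matrix (Fin (n - k + 4)) (Fin (n + 1)) (MvPolynomial (Fin (k + 1)) K) :=
  fun j c =>
    if hj : (j : ℕ) ≤ n - k then
      if h : (j : ℕ) ≤ (c : ℕ) ∧ (c : ℕ) ≤ (j : ℕ) + k then
        MvPolynomial.X ⟨(c : ℕ) - (j : ℕ), by omega⟩
      else 0
    else
      MvPolynomial.C (bcoeff n (f ⟨(j : ℕ) - (n - k + 1), by have := j.isLt; omega⟩) c)

/-- The set of `(n-k+3) × (n-k+3)` minors of the matrix `M_k`; it generates the ideal
`I_{X_k}`. -/
def minorsSet {K : Type*} [Field K] (n k : ℕ) (f : Fin 3 → MvPolynomial (Fin 2) K) :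
    Set (MvPolynomial (Fin (k + 1)) K) :=
  { g | ∃ (r : Fin (n - k + 3) → Fin (n - k + 4)) (c : Fin (n - k + 3) → Fin (n + 1)),
      Function.Injective r ∧ Function.Injective c ∧
      g = ((Mmat n k f).submatrix r c).det }

/-- The projective zero locus `X_k(K) ⊆ ℙ^k(K)` of the ideal of minors of `M_k`. -/
def XkSet {K : Type*} [Field K] (n k : ℕ) (f : Fin 3 → MvPolynomial (Fin 2) K) :
    Set (Projectivization K (Fin (k + 1) → K)) :=
  { P | ∀ g ∈ minorsSet n k f, MvPolynomial.eval P.rep g = 0 }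

/-- Evaluation of the parameterization at a vector `v ∈ K²`. -/
def evalVec {K : Type*} [Field K] (f : Fin 3 → MvPolynomial (Fin 2) K) (v : Fin 2 → K) :
    Fin 3 → K :=
  fun u => MvPolynomial.eval v (f u)

/-- The induced map `f : ℙ¹(K) → ℙ²(K)` (with a junk value where undefined). -/
def projMap {K : Type*} [Field K] (f : Fin 3 → MvPolynomial (Fin 2) K)
    (P : Projectivization K (Fin 2 → K)) : Projectivization K (Fin 3 → K) :=
  haveI := Classical.propDecidable (evalVec f P.rep ≠ 0)
  if h : evalVec f P.rep ≠ 0 then Projectivization.mk K _ h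
  else Projectivization.mk K (fun _ => 1) (fun hc => one_ne_zero (congrFun hc 0))

/-- `f = (f_0, f_1, f_2)` is a proper parameterization of degree `n`: the `f_u` are
homogeneous of degree `n`, have no common zero outside the origin, and the induced map
`ℙ¹(K) → ℙ²(K)` is injective outside some finite set. -/
structure IsProperParam {K : Type*} [Field K] (n : ℕ)
    (f : Fin 3 → MvPolynomial (Fin 2) K) : Prop where
  homog : ∀ u, (f u).IsHomogeneous n
  no_common_zero : ∀ v : Fin 2 → K, v ≠ 0 → evalVec f v ≠ 0
  gen_injective : ∃ S : Set (Projectivization K (Fin 2 → K)), S.Finite ∧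
    Set.InjOn (projMap f) Sᶜ

/-- The homogeneous vanishing ideal of the point `p ∈ ℙ²(K)`. -/
def pointIdeal {K : Type*} [Field K] (p : Fin 3 → K) : Ideal (MvPolynomial (Fin 3) K) :=
  Ideal.span { L | L.IsHomogeneous 1 ∧ MvPolynomial.eval p L = 0 }

/-- The multiplicity of the curve `{F = 0}` at the point `p`:
the largest `m` with `F ∈ I(p)^m`. -/
def multAt {K : Type*} [Field K] (F : MvPolynomial (Fin 3) K) (p : Fin 3 → K) : ℕ :=
  sSup { m | F ∈ pointIdeal p ^ m }

/-- The cross difference `p_i f_j - p_j f_i`. -/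
def crossDiff {K : Type*} [Field K] (f : Fin 3 → MvPolynomial (Fin 2) K) (p : Fin 3 → K)
    (i j : Fin 3) : MvPolynomial (Fin 2) K :=
  MvPolynomial.C (p i) * f j - MvPolynomial.C (p j) * f i

/-- `G` is a greatest common divisor of the three cross differences `p_i f_j - p_j f_i`,
`0 ≤ i < j ≤ 2`. -/
def IsGcdOfCross {K : Type*} [Field K] (f : Fin 3 → MvPolynomial (Fin 2) K) (p : Fin 3 → K)
    (G : MvPolynomial (Fin 2) K) : Prop :=
  (∀ i j : Fin 3, i < j → G ∣ crossDiff f p i j) ∧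
  (∀ D : MvPolynomial (Fin 2) K, (∀ i j : Fin 3, i < j → D ∣ crossDiff f p i j) → D ∣ G)

/-- The linear binary form with root `v = (v 0 : v 1)`. -/
def linFormOf {K : Type*} [Field K] (v : Fin 2 → K) : MvPolynomial (Fin 2) K :=
  MvPolynomial.C (v 1) * MvPolynomial.X 0 - MvPolynomial.C (v 0) * MvPolynomial.X 1

/-- The multiplicity of `v` as a root of the binary form `h`. -/
def ordAt {K : Type*} [Field K] (v : Fin 2 → K) (h : MvPolynomial (Fin 2) K) : ℕ :=
  sSup { e | linFormOf v ^ e ∣ h }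

/-- The point `x ∈ ℙ²` lies on the conic `4 x₀ x₂ - x₁² = 0`. -/
def onConic {K : Type*} [Field K] (x : Fin 3 → K) : Prop :=
  4 * x 0 * x 2 - x 1 ^ 2 = 0

private theorem aux_step {K : Type*} [Field K] (n : ℕ) :
    Ideal.span ({MvPolynomial.X 0 ^ (n + 1), MvPolynomial.X 0 * MvPolynomial.X 1,
        MvPolynomial.X 1 ^ 2} : Set (MvPolynomial (Fin 2) K)) *
      Ideal.span {MvPolynomial.X 0, MvPolynomial.X 1} ≤
    Ideal.span {MvPolynomial.X 0 ^ (n + 2), MvPolynomial.X 0 * MvPolynomial.X 1,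
        MvPolynomial.X 1 ^ 2} := by
  rw [Ideal.span_mul_span', Ideal.span_le]
  rintro z ⟨u, hu, v, hv, rfl⟩
  beta_reduce
  have h1 : (X 0 : MvPolynomial (Fin 2) K) ^ (n + 2) ∈
      Ideal.span ({X 0 ^ (n + 2), X 0 * X 1, X 1 ^ 2} : Set (MvPolynomial (Fin 2) K)) :=
    Ideal.subset_span (Set.mem_insert _ _)
  have h2 : (X 0 : MvPolynomial (Fin 2) K) * X 1 ∈
      Ideal.span ({X 0 ^ (n + 2), X 0 * X 1, X 1 ^ 2} : Set (MvPolynomial (Fin 2) K)) :=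
    Ideal.subset_span (Set.mem_insert_of_mem _ (Set.mem_insert _ _))
  have h3 : (X 1 : MvPolynomial (Fin 2) K) ^ 2 ∈
      Ideal.span ({X 0 ^ (n + 2), X 0 * X 1, X 1 ^ 2} : Set (MvPolynomial (Fin 2) K)) :=
    Ideal.subset_span (Set.mem_insert_of_mem _ (Set.mem_insert_of_mem _ rfl))
  simp only [Set.mem_insert_iff, Set.mem_singleton_iff] at hu hv
  rcases hu with rfl | rfl | rfl <;> rcases hv with rfl | rfl
  · rw [show (X 0 : MvPolynomial (Fin 2) K) ^ (n + 1) * X 0 = X 0 ^ (n + 2) by ring]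
    exact h1
  · rw [show (X 0 : MvPolynomial (Fin 2) K) ^ (n + 1) * X 1 = X 0 ^ n * (X 0 * X 1) by ring]
    exact Ideal.mul_mem_left _ _ h2
  · rw [show (X 0 : MvPolynomial (Fin 2) K) * X 1 * X 0 = X 0 * (X 0 * X 1) by ring]
    exact Ideal.mul_mem_left _ _ h2
  · rw [show (X 0 : MvPolynomial (Fin 2) K) * X 1 * X 1 = X 0 * X 1 ^ 2 by ring]
    exact Ideal.mul_mem_left _ _ h3
  · rw [show (X 1 : MvPolynomial (Fin 2) K) ^ 2 * X 0 = X 0 * X 1 ^ 2 by ring]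
    exact Ideal.mul_mem_left _ _ h3
  · rw [show (X 1 : MvPolynomial (Fin 2) K) ^ 2 * X 1 = X 1 * X 1 ^ 2 by ring]
    exact Ideal.mul_mem_left _ _ h3

private theorem aux_pow_le {K : Type*} [Field K] (k : ℕ) :
    (Ideal.span ({MvPolynomial.X 0, MvPolynomial.X 1} : Set (MvPolynomial (Fin 2) K))) ^ (k + 2) ≤
      Ideal.span {MvPolynomial.X 0 ^ (k + 2), MvPolynomial.X 0 * MvPolynomial.X 1,
        MvPolynomial.X 1 ^ 2} := by
  induction k with
  | zero =>
    rw [pow_two, Ideal.span_mul_span', Ideal.span_le]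
    rintro z ⟨u, hu, v, hv, rfl⟩
    beta_reduce
    simp only [zero_add]
    have h1 : (X 0 : MvPolynomial (Fin 2) K) ^ 2 ∈
        Ideal.span ({X 0 ^ 2, X 0 * X 1, X 1 ^ 2} : Set (MvPolynomial (Fin 2) K)) :=
      Ideal.subset_span (Set.mem_insert _ _)
    have h2 : (X 0 : MvPolynomial (Fin 2) K) * X 1 ∈
        Ideal.span ({X 0 ^ 2, X 0 * X 1, X 1 ^ 2} : Set (MvPolynomial (Fin 2) K)) :=
      Ideal.subset_span (Set.mem_insert_of_mem _ (Set.mem_insert _ _))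
    have h3 : (X 1 : MvPolynomial (Fin 2) K) ^ 2 ∈
        Ideal.span ({X 0 ^ 2, X 0 * X 1, X 1 ^ 2} : Set (MvPolynomial (Fin 2) K)) :=
      Ideal.subset_span (Set.mem_insert_of_mem _ (Set.mem_insert_of_mem _ rfl))
    simp only [Set.mem_insert_iff, Set.mem_singleton_iff] at hu hv
    rcases hu with rfl | rfl <;> rcases hv with rfl | rfl
    · rw [show (X 0 : MvPolynomial (Fin 2) K) * X 0 = X 0 ^ 2 by ring]; exact h1
    · exact h2
    · rw [show (X 1 : MvPolynomial (Fin 2) K) * X 0 = X 0 * X 1 by ring]; exact h2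
    · rw [show (X 1 : MvPolynomial (Fin 2) K) * X 1 = X 1 ^ 2 by ring]; exact h3
  | succ n ih =>
    calc (Ideal.span ({MvPolynomial.X 0, MvPolynomial.X 1} :
            Set (MvPolynomial (Fin 2) K))) ^ (n + 1 + 2)
        = (Ideal.span ({MvPolynomial.X 0, MvPolynomial.X 1} :
            Set (MvPolynomial (Fin 2) K))) ^ (n + 2) *
            Ideal.span {MvPolynomial.X 0, MvPolynomial.X 1} := pow_succ _ _
      _ ≤ Ideal.span {MvPolynomial.X 0 ^ (n + 2), MvPolynomial.X 0 * MvPolynomial.X 1,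
            MvPolynomial.X 1 ^ 2} * Ideal.span {MvPolynomial.X 0, MvPolynomial.X 1} :=
          Ideal.mul_mono_left ih
      _ ≤ _ := by
          have := aux_step (K := K) (n + 1)
          simpa [show n + 1 + 1 = n + 2 by omega, show n + 1 + 2 = n + 3 by omega] using this

private theorem aux_coeff_zero {K : Type*} [Field K] (m : ℕ) (hm : 1 ≤ m)
    {t : MvPolynomial (Fin 2) K}
    (ht : t ∈ Ideal.span ({MvPolynomial.X 0 ^ (m + 1),
      MvPolynomial.X 0 * MvPolynomial.X 1, MvPolynomial.X 1 ^ 2} :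
        Set (MvPolynomial (Fin 2) K))) :
    MvPolynomial.coeff (Finsupp.single 1 1) t = 0 ∧
      MvPolynomial.coeff (Finsupp.single 0 m) t = 0 := by
  have hset : ({X 0 ^ (m + 1), X 0 * X 1, X 1 ^ 2} : Set (MvPolynomial (Fin 2) K)) =
      (fun s => monomial s (1 : K)) ''
        {Finsupp.single 0 (m + 1), Finsupp.single 0 1 + Finsupp.single 1 1,
          Finsupp.single 1 2} := by
    have e1 : (X 0 : MvPolynomial (Fin 2) K) ^ (m + 1)
        = monomial (Finsupp.single 0 (m + 1)) (1 : K) := X_pow_eq_monomial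
    have e2 : (X 0 : MvPolynomial (Fin 2) K) * X 1
        = monomial (Finsupp.single 0 1 + Finsupp.single 1 1) (1 : K) := by
      rw [show (X 0 : MvPolynomial (Fin 2) K) = monomial (Finsupp.single 0 1) (1 : K) from rfl,
        show (X 1 : MvPolynomial (Fin 2) K) = monomial (Finsupp.single 1 1) (1 : K) from rfl,
        monomial_mul, one_mul]
    have e3 : (X 1 : MvPolynomial (Fin 2) K) ^ 2
        = monomial (Finsupp.single 1 2) (1 : K) := X_pow_eq_monomial
    rw [Set.image_insert_eq, Set.image_insert_eq, Set.image_singleton, e1, e2, e3]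
  rw [hset] at ht
  have hcrit := mem_ideal_span_monomial_image.mp ht
  constructor
  · by_contra h
    obtain ⟨si, hsi, hle⟩ := hcrit _ (mem_support_iff.mpr h)
    simp only [Set.mem_insert_iff, Set.mem_singleton_iff] at hsi
    rcases hsi with rfl | rfl | rfl
    · have := Finsupp.le_def.mp hle 0
      simp [Finsupp.single_apply] at this
    · have := Finsupp.le_def.mp hle 0
      simp [Finsupp.single_apply] at this
    · have := Finsupp.le_def.mp hle 1
      simp [Finsupp.single_apply] at this
  · by_contra h
    obtain ⟨si, hsi, hle⟩ := hcrit _ (mem_support_iff.mpr h)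
    simp only [Set.mem_insert_iff, Set.mem_singleton_iff] at hsi
    rcases hsi with rfl | rfl | rfl
    · have := Finsupp.le_def.mp hle 0
      rw [Finsupp.single_eq_same, Finsupp.single_eq_same] at this
      omega
    · have := Finsupp.le_def.mp hle 1
      simp [Finsupp.single_apply] at this
    · have := Finsupp.le_def.mp hle 1
      simp [Finsupp.single_apply] at this

private theorem aux_coeffs {K : Type*} [Field K] (m : ℕ) (hm : 1 ≤ m)
    (a : MvPolynomial (Fin 2) K) :
    MvPolynomial.coeff (Finsupp.single 1 1) (a * MvPolynomial.X 1) =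
        MvPolynomial.coeff 0 a ∧
      MvPolynomial.coeff (Finsupp.single 1 1) (a * MvPolynomial.X 0 ^ m) = 0 ∧
      MvPolynomial.coeff (Finsupp.single 0 m) (a * MvPolynomial.X 1) = 0 ∧
      MvPolynomial.coeff (Finsupp.single 0 m) (a * MvPolynomial.X 0 ^ m) =
        MvPolynomial.coeff 0 a := by
  refine ⟨?_, ?_, ?_, ?_⟩
  · rw [coeff_mul_X']
    simp
  · rw [X_pow_eq_monomial, coeff_mul_monomial', if_neg]
    intro h
    have := Finsupp.le_def.mp h 0
    simp [Finsupp.single_apply] at this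
    omega
  · rw [coeff_mul_X', if_neg]
    simp [Finsupp.single_apply]
  · rw [X_pow_eq_monomial, coeff_mul_monomial', if_pos le_rfl]
    simp

/-- In `K[x,y]` with `char K ≠ 2`: (1) `(y - x^m) + (y + x^m) = (y, x^m)`;
(2) `((y - x^m) + (x,y)^{m+1}) ∩ ((y + x^m) + (x,y)^{m+1}) = (x^{m+1}, xy, y²)`. -/
theorem statement_14 {K : Type*} [Field K] (h2 : (2 : K) ≠ 0) (m : ℕ) (hm : 1 ≤ m) :
    (Ideal.span {(MvPolynomial.X 1 : MvPolynomial (Fin 2) K) - MvPolynomial.X 0 ^ m} ⊔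
        Ideal.span {(MvPolynomial.X 1 : MvPolynomial (Fin 2) K) + MvPolynomial.X 0 ^ m} =
      Ideal.span {(MvPolynomial.X 1 : MvPolynomial (Fin 2) K), MvPolynomial.X 0 ^ m}) ∧
    ((Ideal.span {(MvPolynomial.X 1 : MvPolynomial (Fin 2) K) - MvPolynomial.X 0 ^ m} ⊔
        (Ideal.span {(MvPolynomial.X 0 : MvPolynomial (Fin 2) K),
          MvPolynomial.X 1}) ^ (m + 1)) ⊓
      (Ideal.span {(MvPolynomial.X 1 : MvPolynomial (Fin 2) K) + MvPolynomial.X 0 ^ m} ⊔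
        (Ideal.span {(MvPolynomial.X 0 : MvPolynomial (Fin 2) K),
          MvPolynomial.X 1}) ^ (m + 1)) =
      Ideal.span {(MvPolynomial.X 0 : MvPolynomial (Fin 2) K) ^ (m + 1),
        MvPolynomial.X 0 * MvPolynomial.X 1, MvPolynomial.X 1 ^ 2}) := by
  have key : (MvPolynomial.C (2⁻¹ : K) : MvPolynomial (Fin 2) K) * 2 = 1 := by
    rw [← map_ofNat (MvPolynomial.C : K →+* MvPolynomial (Fin 2) K) 2, ← MvPolynomial.C_mul,
      inv_mul_cancel₀ h2, MvPolynomial.C_1]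
  constructor
  · -- part 1
    apply le_antisymm
    · apply sup_le <;> rw [Ideal.span_le, Set.singleton_subset_iff]
      · exact Ideal.mem_span_pair.mpr ⟨1, -1, by ring⟩
      · exact Ideal.mem_span_pair.mpr ⟨1, 1, by ring⟩
    · rw [Ideal.span_le]
      rintro g hg
      simp only [Set.mem_insert_iff, Set.mem_singleton_iff] at hg
      rcases hg with rfl | rfl
      · have hmem : MvPolynomial.C (2⁻¹ : K) * (X 1 - X 0 ^ m) +
            MvPolynomial.C (2⁻¹ : K) * (X 1 + X 0 ^ m) ∈
            Ideal.span {(MvPolynomial.X 1 : MvPolynomial (Fin 2) K) - MvPolynomial.X 0 ^ m} ⊔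
              Ideal.span {(MvPolynomial.X 1 : MvPolynomial (Fin 2) K) + MvPolynomial.X 0 ^ m} :=
          add_mem (Ideal.mem_sup_left (Ideal.mem_span_singleton'.mpr ⟨_, rfl⟩))
            (Ideal.mem_sup_right (Ideal.mem_span_singleton'.mpr ⟨_, rfl⟩))
        have heq : (X 1 : MvPolynomial (Fin 2) K) =
            MvPolynomial.C (2⁻¹ : K) * (X 1 - X 0 ^ m) +
              MvPolynomial.C (2⁻¹ : K) * (X 1 + X 0 ^ m) := by
          linear_combination (-(X 1 : MvPolynomial (Fin 2) K)) * key
        rwa [← heq] at hmem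
      · have hmem : MvPolynomial.C (2⁻¹ : K) * (X 1 + X 0 ^ m) -
            MvPolynomial.C (2⁻¹ : K) * (X 1 - X 0 ^ m) ∈
            Ideal.span {(MvPolynomial.X 1 : MvPolynomial (Fin 2) K) - MvPolynomial.X 0 ^ m} ⊔
              Ideal.span {(MvPolynomial.X 1 : MvPolynomial (Fin 2) K) + MvPolynomial.X 0 ^ m} :=
          sub_mem (Ideal.mem_sup_right (Ideal.mem_span_singleton'.mpr ⟨_, rfl⟩))
            (Ideal.mem_sup_left (Ideal.mem_span_singleton'.mpr ⟨_, rfl⟩))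
        have heq : (X 0 : MvPolynomial (Fin 2) K) ^ m =
            MvPolynomial.C (2⁻¹ : K) * (X 1 + X 0 ^ m) -
              MvPolynomial.C (2⁻¹ : K) * (X 1 - X 0 ^ m) := by
          linear_combination (-((X 0 : MvPolynomial (Fin 2) K) ^ m)) * key
        rwa [← heq] at hmem
  · -- part 2
    have hx : (X 0 : MvPolynomial (Fin 2) K) ∈
        Ideal.span ({X 0, X 1} : Set (MvPolynomial (Fin 2) K)) :=
      Ideal.subset_span (Set.mem_insert _ _)
    have hy : (X 1 : MvPolynomial (Fin 2) K) ∈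
        Ideal.span ({X 0, X 1} : Set (MvPolynomial (Fin 2) K)) :=
      Ideal.subset_span (Set.mem_insert_of_mem _ rfl)
    have hPT : (Ideal.span ({X 0, X 1} : Set (MvPolynomial (Fin 2) K))) ^ (m + 1) ≤
        Ideal.span {X 0 ^ (m + 1), X 0 * X 1, X 1 ^ 2} := by
      have := aux_pow_le (K := K) (m - 1)
      rwa [show m - 1 + 2 = m + 1 by omega] at this
    have g1 : (X 0 : MvPolynomial (Fin 2) K) ^ (m + 1) ∈
        Ideal.span ({X 0 ^ (m + 1), X 0 * X 1, X 1 ^ 2} : Set (MvPolynomial (Fin 2) K)) :=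
      Ideal.subset_span (Set.mem_insert _ _)
    have g2 : (X 0 : MvPolynomial (Fin 2) K) * X 1 ∈
        Ideal.span ({X 0 ^ (m + 1), X 0 * X 1, X 1 ^ 2} : Set (MvPolynomial (Fin 2) K)) :=
      Ideal.subset_span (Set.mem_insert_of_mem _ (Set.mem_insert _ _))
    have g3 : (X 1 : MvPolynomial (Fin 2) K) ^ 2 ∈
        Ideal.span ({X 0 ^ (m + 1), X 0 * X 1, X 1 ^ 2} : Set (MvPolynomial (Fin 2) K)) :=
      Ideal.subset_span (Set.mem_insert_of_mem _ (Set.mem_insert_of_mem _ rfl))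
    have hxp : (X 0 : MvPolynomial (Fin 2) K) ^ (m + 1) ∈
        (Ideal.span ({X 0, X 1} : Set (MvPolynomial (Fin 2) K))) ^ (m + 1) :=
      Ideal.pow_mem_pow hx (m + 1)
    have hxy : (X 0 : MvPolynomial (Fin 2) K) ^ m * X 1 ∈
        (Ideal.span ({X 0, X 1} : Set (MvPolynomial (Fin 2) K))) ^ (m + 1) := by
      rw [pow_succ]
      exact Ideal.mul_mem_mul (Ideal.pow_mem_pow hx m) hy
    apply le_antisymm
    · -- hard direction
      rintro g hg
      obtain ⟨hg1, hg2⟩ := Ideal.mem_inf.mp hg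
      obtain ⟨a, p, hp, hpa⟩ := Ideal.mem_span_singleton_sup.mp hg1
      obtain ⟨b, q, hq, hqb⟩ := Ideal.mem_span_singleton_sup.mp hg2
      have hpT := hPT hp
      have hqT := hPT hq
      have htT : a * (X 1 - X 0 ^ m) - b * (X 1 + X 0 ^ m) ∈
          Ideal.span ({X 0 ^ (m + 1), X 0 * X 1, X 1 ^ 2} :
            Set (MvPolynomial (Fin 2) K)) := by
        have hdiff : a * (X 1 - X 0 ^ m) - b * (X 1 + X 0 ^ m) = q - p := by
          linear_combination hpa - hqb
        rw [hdiff]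
        exact sub_mem hqT hpT
      obtain ⟨hc1, hc2⟩ := aux_coeff_zero m hm htT
      obtain ⟨A1, A2, A3, A4⟩ := aux_coeffs m hm a
      obtain ⟨B1, B2, B3, B4⟩ := aux_coeffs m hm b
      rw [mul_sub, mul_add, MvPolynomial.coeff_sub, MvPolynomial.coeff_sub,
        MvPolynomial.coeff_add, A1, A2, B1, B2] at hc1
      rw [mul_sub, mul_add, MvPolynomial.coeff_sub, MvPolynomial.coeff_sub,
        MvPolynomial.coeff_add, A3, A4, B3, B4] at hc2
      have ha0 : MvPolynomial.coeff 0 a = 0 := by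
        have h2a : (2 : K) * MvPolynomial.coeff 0 a = 0 := by linear_combination hc1 - hc2
        exact (mul_eq_zero.mp h2a).resolve_left h2
      have haS : a ∈ Ideal.span ({X 0, X 1} : Set (MvPolynomial (Fin 2) K)) := by
        have hrange : Set.range (X : Fin 2 → MvPolynomial (Fin 2) K) =
            {X 0, X 1} := by
          ext pp
          constructor
          · rintro ⟨i, rfl⟩
            fin_cases i
            · exact Set.mem_insert _ _
            · exact Set.mem_insert_of_mem _ rfl
          · rintro (rfl | rfl)
            · exact ⟨0, rfl⟩
            · exact ⟨1, rfl⟩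
        rw [← hrange, ← Set.image_univ, MvPolynomial.mem_ideal_span_X_image]
        intro d hd
        have hd0 : d ≠ 0 := by
          rintro rfl
          exact (MvPolynomial.mem_support_iff.mp hd) ha0
        obtain ⟨i, hi⟩ := Finsupp.ne_iff.mp hd0
        exact ⟨i, Set.mem_univ i, by simpa using hi⟩
      obtain ⟨u, v, huv⟩ := Ideal.mem_span_pair.mp haS
      obtain ⟨k, rfl⟩ : ∃ k, m = k + 1 := ⟨m - 1, by omega⟩
      have hmem : a * (X 1 - X 0 ^ (k + 1)) ∈
          Ideal.span ({X 0 ^ (k + 1 + 1), X 0 * X 1, X 1 ^ 2} :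
            Set (MvPolynomial (Fin 2) K)) := by
        have hid : a * (X 1 - X 0 ^ (k + 1)) =
            (-u) * X 0 ^ (k + 1 + 1) + (u - v * X 0 ^ k) * (X 0 * X 1) + v * X 1 ^ 2 := by
          rw [← huv]; ring
        rw [hid]
        exact add_mem (add_mem (Ideal.mul_mem_left _ _ g1) (Ideal.mul_mem_left _ _ g2))
          (Ideal.mul_mem_left _ _ g3)
      rw [← hpa]
      exact add_mem hmem hpT
    · -- easy direction
      apply le_inf <;> rw [Ideal.span_le] <;> rintro g hg <;>
        simp only [Set.mem_insert_iff, Set.mem_singleton_iff] at hg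
      · rcases hg with rfl | rfl | rfl
        · exact Ideal.mem_sup_right hxp
        · rw [show (X 0 : MvPolynomial (Fin 2) K) * X 1 =
              X 0 * (X 1 - X 0 ^ m) + X 0 ^ (m + 1) by ring]
          exact add_mem (Ideal.mem_sup_left (Ideal.mem_span_singleton'.mpr ⟨_, rfl⟩))
            (Ideal.mem_sup_right hxp)
        · rw [show (X 1 : MvPolynomial (Fin 2) K) ^ 2 =
              X 1 * (X 1 - X 0 ^ m) + X 0 ^ m * X 1 by ring]
          exact add_mem (Ideal.mem_sup_left (Ideal.mem_span_singleton'.mpr ⟨_, rfl⟩))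
            (Ideal.mem_sup_right hxy)
      · rcases hg with rfl | rfl | rfl
        · exact Ideal.mem_sup_right hxp
        · rw [show (X 0 : MvPolynomial (Fin 2) K) * X 1 =
              X 0 * (X 1 + X 0 ^ m) - X 0 ^ (m + 1) by ring]
          exact sub_mem (Ideal.mem_sup_left (Ideal.mem_span_singleton'.mpr ⟨_, rfl⟩))
            (Ideal.mem_sup_right hxp)
        · rw [show (X 1 : MvPolynomial (Fin 2) K) ^ 2 =
              X 1 * (X 1 + X 0 ^ m) - X 0 ^ m * X 1 by ring]
          exact sub_mem (Ideal.mem_sup_left (Ideal.mem_span_singleton'.mpr ⟨_, rfl⟩))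
            (Ideal.mem_sup_right hxy)

end
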